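/- arXiv:1704.08739 — 2 statements merged into one kernel-verified Lean document; each statement's English description precedes it below -/
import Mathlib

section
/- Let k be an odd positive integer and let G be an odd-k-edge-connected graph in which every vertex has degree k or 2k; define f(v) = d_G(v)/k. Let S and T be disjoint vertex subsets of G, let 𝒪 be the set of components U of G − S − T for which Σ_{v∈U} f(v) + e(U,T) is odd, and partition 𝒪 into 𝒪₁ = {U ∈ 𝒪 : e(U,T) = 0} and 𝒪₂ = {U ∈ 𝒪 : e(U,T) ≥ 1}. Then Σ_{U∈𝒪} e(U,S) ≥ k·|𝒪₁| + |𝒪₂|. -/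
/-- A multigraph: each edge `e` has two half-edges, indexed by `Bool`,
with `ends e b` the endpoint of the half-edge `(e, b)`. Loops and
multiple edges are allowed. -/
structure Multigraph (V E : Type) where
  ends : E → Bool → V

namespace Multigraph

variable {V E : Type}

/-- The degree of a vertex: the number of half-edges incident with it
(loops are counted twice). -/
noncomputable def degree (G : Multigraph V E) (v : V) : ℕ :=
  Nat.card {h : E × Bool // G.ends h.1 h.2 = v}

/-- Adjacency using only the edges in `S`. -/
def adjOn (G : Multigraph V E) (S : Set E) (u v : V) : Prop :=
  ∃ e ∈ S, (G.ends e true = u ∧ G.ends e false = v) ∨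
           (G.ends e true = v ∧ G.ends e false = u)

/-- The number of connected components of the spanning subgraph of `G`
with edge set `S`. -/
noncomputable def numComponents (G : Multigraph V E) (S : Set E) : ℕ :=
  Nat.card (Quot (G.adjOn S))

/-- `F` is an odd edge cut: `|F|` is odd and deleting `F` increases the
number of components. -/
def IsOddCut (G : Multigraph V E) (F : Set E) : Prop :=
  Odd F.ncard ∧ G.numComponents Set.univ < G.numComponents Fᶜ

/-- `G` is odd-`lam`-edge-connected: it has no odd edge cut of size at most `lam - 2`. -/
def OddEdgeConnected (G : Multigraph V E) (lam : ℕ) : Prop :=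
  ∀ F : Set E, F.ncard ≤ lam - 2 → ¬ G.IsOddCut F

/-- `τ` is an orientation of the signed graph `(G, σ)`: a `±1`-valued map on
half-edges with `τ(h₁) * τ(h₂) = - σ(e)` for the two half-edges of each edge `e`. -/
def IsOrientation (G : Multigraph V E) (σ : E → ℤ) (τ : E → Bool → ℤ) : Prop :=
  (∀ e b, τ e b = 1 ∨ τ e b = -1) ∧ ∀ e, τ e true * τ e false = -σ e

/-- The boundary of `f` at `v` under the orientation `τ`:
`∂f(v) = Σ_{h ∈ H(v)} f(e_h) τ(h)`. -/
noncomputable def boundary (G : Multigraph V E) (τ : E → Bool → ℤ) (f : E → ℤ) (v : V) : ℤ :=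
  ∑ᶠ h ∈ {h : E × Bool | G.ends h.1 h.2 = v}, f h.1 * τ h.1 h.2

/-- The set of edges incident with `v`. -/
def incident (G : Multigraph V E) (v : V) : Set E :=
  {e | ∃ b, G.ends e b = v}

/-- The graph `G_{(v;F)}` obtained by splitting the edges of `F` away from `v`:
a new vertex `none` is added, and every half-edge of an edge of `F` that ends at `v`
now ends at the new vertex. -/
noncomputable def split (G : Multigraph V E) (v : V) (F : Set E) :
    Multigraph (Option V) E where
  ends e b :=
    haveI := Classical.dec (e ∈ F ∧ G.ends e b = v)
    if e ∈ F ∧ G.ends e b = v then none else some (G.ends e b)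

/-- The degree of `v` in the spanning subgraph with edge set `H`. -/
noncomputable def degreeOn (G : Multigraph V E) (H : Set E) (v : V) : ℕ :=
  Nat.card {h : E × Bool // h.1 ∈ H ∧ G.ends h.1 h.2 = v}

/-- The degree of `v` in the graph `G − S` obtained by deleting the vertices of `S`. -/
noncomputable def degreeAvoiding (G : Multigraph V E) (S : Set V) (v : V) : ℕ :=
  Nat.card {h : E × Bool // G.ends h.1 h.2 = v ∧
    G.ends h.1 true ∉ S ∧ G.ends h.1 false ∉ S}

/-- Adjacency within the subgraph induced by the vertex set `W`. -/
def inducedAdj (G : Multigraph V E) (W : Set V) (u v : V) : Prop :=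
  ∃ e, G.ends e true ∈ W ∧ G.ends e false ∈ W ∧
    ((G.ends e true = u ∧ G.ends e false = v) ∨
     (G.ends e true = v ∧ G.ends e false = u))

/-- `U` is the vertex set of a connected component of the subgraph of `G`
induced by `W`. -/
def IsComponent (G : Multigraph V E) (W : Set V) (U : Set V) : Prop :=
  U.Nonempty ∧ U ⊆ W ∧
    ∀ u ∈ U, ∀ x, (x ∈ U ↔ x ∈ W ∧ Relation.EqvGen (G.inducedAdj W) u x)

/-- `e(X,Y)`: the number of edges with one end in `X` and the other end in `Y`
(for disjoint `X`, `Y`). -/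
noncomputable def crossCount (G : Multigraph V E) (X Y : Set V) : ℕ :=
  {e | (G.ends e true ∈ X ∧ G.ends e false ∈ Y) ∨
       (G.ends e true ∈ Y ∧ G.ends e false ∈ X)}.ncard

end Multigraph

section Helpers
open Multigraph
variable {V E : Type} [Fintype V] [Fintype E]

lemma sum_degree_mem (G : Multigraph V E) (U : Set V) :
    ∑ᶠ v ∈ U, G.degree v = Nat.card {h : E × Bool // G.ends h.1 h.2 ∈ U} := by
  classical
  have h1 : ∑ᶠ v ∈ U, G.degree v = ∑ v ∈ U.toFinset, G.degree v := by
    rw [← finsum_mem_coe_finset]; simp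
  rw [h1, Nat.card_eq_fintype_card, Fintype.card_subtype]
  have h2 : ∀ v, G.degree v
      = (Finset.univ.filter (fun h : E × Bool => G.ends h.1 h.2 = v)).card := by
    intro v; rw [Multigraph.degree, Nat.card_eq_fintype_card, Fintype.card_subtype]
  simp_rw [h2]
  rw [Finset.card_eq_sum_card_fiberwise
    (f := fun h : E × Bool => G.ends h.1 h.2) (t := U.toFinset)
    (by intro x hx; simp at hx ⊢; exact hx)]
  apply Finset.sum_congr rfl
  intro v hv
  congr 1
  ext h
  simp at hv ⊢
  intro h'
  rw [h']; exact hv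
lemma halfedge_parity (G : Multigraph V E) (U : Set V) :
    Nat.card {h : E × Bool // G.ends h.1 h.2 ∈ U} % 2 = G.crossCount U Uᶜ % 2 := by
  classical
  rw [Nat.card_eq_fintype_card, Fintype.card_subtype]
  rw [Finset.card_eq_sum_card_fiberwise (f := Prod.fst) (t := Finset.univ)
    (fun x _ => Finset.mem_univ _)]
  have hfib : ∀ e : E,
      ((Finset.univ.filter (fun h : E × Bool => G.ends h.1 h.2 ∈ U)).filter
        (fun h => h.1 = e)).card
      = (if G.ends e true ∈ U then 1 else 0) + (if G.ends e false ∈ U then 1 else 0) := by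
    intro e
    rw [Finset.card_filter]
    rw [Finset.sum_filter]
    rw [Fintype.sum_prod_type]
    rw [Finset.sum_eq_single e]
    · rw [Fintype.sum_bool]
      by_cases h1 : G.ends e true ∈ U <;> by_cases h2 : G.ends e false ∈ U <;> simp [h1, h2]
    · intro b _ hb
      apply Finset.sum_eq_zero; intro x _
      simp [hb]
    · intro h; exact absurd (Finset.mem_univ e) h
  simp_rw [hfib]
  have hcross : G.crossCount U Uᶜ
      = (Finset.univ.filter (fun e : E =>
          ((G.ends e true ∈ U ∧ G.ends e false ∈ Uᶜ) ∨
           (G.ends e true ∈ Uᶜ ∧ G.ends e false ∈ U)))).card := by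
    rw [Multigraph.crossCount, Set.ncard_eq_toFinset_card', Set.toFinset_setOf]
  rw [hcross, Finset.card_filter, Finset.sum_nat_mod]
  conv_rhs => rw [Finset.sum_nat_mod]
  congr 1
  apply Finset.sum_congr rfl
  intro e _
  by_cases h1 : G.ends e true ∈ U <;> by_cases h2 : G.ends e false ∈ U <;>
    simp [h1, h2, Set.mem_compl_iff]
lemma comp_edge (G : Multigraph V E) {W U : Set V} (hU : G.IsComponent W U)
    {e : E} {b : Bool} (hb : G.ends e b ∈ U) (hW : G.ends e (!b) ∈ W) :
    G.ends e (!b) ∈ U := by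
  obtain ⟨-, hUW, hcomp⟩ := hU
  rw [hcomp (G.ends e b) hb (G.ends e (!b))]
  refine ⟨hW, Relation.EqvGen.rel _ _ ?_⟩
  cases b
  · exact ⟨e, hW, hUW hb, Or.inr ⟨rfl, rfl⟩⟩
  · exact ⟨e, hUW hb, hW, Or.inl ⟨rfl, rfl⟩⟩

lemma crossCount_split (G : Multigraph V E) {S T U : Set V} (hST : Disjoint S T)
    (hU : G.IsComponent (S ∪ T)ᶜ U) :
    G.crossCount U Uᶜ = G.crossCount U S + G.crossCount U T := by
  classical
  have hUW : U ⊆ (S ∪ T)ᶜ := hU.2.1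
  have hUS : ∀ v ∈ U, v ∉ S := fun v hv hs => hUW hv (Or.inl hs)
  have hUT : ∀ v ∈ U, v ∉ T := fun v hv hs => hUW hv (Or.inr hs)
  have hout : ∀ (e : E) (b : Bool), G.ends e b ∈ U → G.ends e (!b) ∈ Uᶜ →
      G.ends e (!b) ∈ S ∪ T := by
    intro e b h1 h2
    by_contra hc
    exact h2 (comp_edge G hU h1 hc)
  rw [Multigraph.crossCount, Multigraph.crossCount, Multigraph.crossCount]
  rw [← Set.ncard_union_eq ?disj (Set.toFinite _) (Set.toFinite _)]
  case disj =>
    rw [Set.disjoint_left]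
    rintro e (⟨h1, h2⟩ | ⟨h1, h2⟩) (⟨h3, h4⟩ | ⟨h3, h4⟩)
    · exact hST.le_bot ⟨h2, h4⟩
    · exact hUT _ h1 h3
    · exact hUS _ h3 h1
    · exact hST.le_bot ⟨h1, h3⟩
  congr 1
  ext e
  simp only [Set.mem_setOf_eq, Set.mem_union]
  constructor
  · rintro (⟨h1, h2⟩ | ⟨h1, h2⟩)
    · have := hout e true h1 (by simpa using h2)
      rcases this with h | h
      · exact Or.inl (Or.inl ⟨h1, h⟩)
      · exact Or.inr (Or.inl ⟨h1, h⟩)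
    · have := hout e false h2 (by simpa using h1)
      rcases this with h | h
      · exact Or.inl (Or.inr ⟨h, h2⟩)
      · exact Or.inr (Or.inr ⟨h, h2⟩)
  · rintro ((⟨h1, h2⟩ | ⟨h1, h2⟩) | (⟨h1, h2⟩ | ⟨h1, h2⟩))
    · exact Or.inl ⟨h1, fun hc => hUS _ hc h2⟩
    · exact Or.inr ⟨fun hc => hUS _ hc h1, h2⟩
    · exact Or.inl ⟨h1, fun hc => hUT _ hc h2⟩
    · exact Or.inr ⟨fun hc => hUT _ hc h1, h2⟩
lemma cut_lt (G : Multigraph V E) (U : Set V)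
    (hne : {e : E | (G.ends e true ∈ U ∧ G.ends e false ∈ Uᶜ) ∨
       (G.ends e true ∈ Uᶜ ∧ G.ends e false ∈ U)}.Nonempty) :
    G.numComponents Set.univ < G.numComponents
      {e : E | (G.ends e true ∈ U ∧ G.ends e false ∈ Uᶜ) ∨
       (G.ends e true ∈ Uᶜ ∧ G.ends e false ∈ U)}ᶜ := by
  classical
  set F := {e : E | (G.ends e true ∈ U ∧ G.ends e false ∈ Uᶜ) ∨
       (G.ends e true ∈ Uᶜ ∧ G.ends e false ∈ U)} with hFdef
  have hmono : ∀ u v, G.adjOn Fᶜ u v → G.adjOn Set.univ u v := by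
    rintro u v ⟨e, -, h⟩; exact ⟨e, trivial, h⟩
  let φ : Quot (G.adjOn Fᶜ) → Quot (G.adjOn Set.univ) :=
    Quot.map id (fun u v h => hmono u v h)
  have hsurj : Function.Surjective φ := by
    intro q; induction q using Quot.ind with
    | _ v => exact ⟨Quot.mk _ v, rfl⟩
  have hinv : ∀ u v, G.adjOn Fᶜ u v → ((u ∈ U) = (v ∈ U)) := by
    rintro u v ⟨e, he, h⟩
    simp only [hFdef, Set.mem_compl_iff, Set.mem_setOf_eq, not_or, not_and,
      Set.not_notMem] at he
    rcases h with ⟨h1, h2⟩ | ⟨h1, h2⟩ <;> subst h1 <;> subst h2 <;>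
      · apply propext
        constructor
        · intro hx
          by_contra hc
          tauto
        · intro hx
          by_contra hc
          tauto
  let g : Quot (G.adjOn Fᶜ) → Prop := Quot.lift (· ∈ U) (fun u v h => hinv u v h)
  have key : ∀ u x, u ∈ U → x ∉ U →
      Quot.mk (G.adjOn Fᶜ) u ≠ Quot.mk (G.adjOn Fᶜ) x := by
    intro u x hu hx heq
    have hg : (u ∈ U) = (x ∈ U) := congrArg g heq
    exact hx (hg ▸ hu)
  obtain ⟨e0, he0⟩ := hne
  have hninj : ¬ Function.Injective φ := by
    intro hi
    have hadj : G.adjOn Set.univ (G.ends e0 true) (G.ends e0 false) :=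
      ⟨e0, trivial, Or.inl ⟨rfl, rfl⟩⟩
    have heq : φ (Quot.mk _ (G.ends e0 true)) = φ (Quot.mk _ (G.ends e0 false)) :=
      Quot.sound hadj
    have heq2 := hi heq
    rcases he0 with ⟨h1, h2⟩ | ⟨h1, h2⟩
    · exact key _ _ h1 h2 heq2
    · exact key _ _ h2 h1 heq2.symm
  haveI : Finite (Quot (G.adjOn Fᶜ)) :=
    Finite.of_surjective (Quot.mk _) Quot.mk_surjective
  haveI : Finite (Quot (G.adjOn (Set.univ : Set E))) :=
    Finite.of_surjective (Quot.mk _) Quot.mk_surjective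
  rw [Multigraph.numComponents, Multigraph.numComponents]
  rcases lt_or_ge (Nat.card (Quot (G.adjOn Set.univ))) (Nat.card (Quot (G.adjOn Fᶜ)))
    with h | h
  · exact h
  · exfalso
    apply hninj
    have hle : Nat.card (Quot (G.adjOn Set.univ)) ≤ Nat.card (Quot (G.adjOn Fᶜ)) :=
      Nat.card_le_card_of_surjective φ hsurj
    have hcard : Nat.card (Quot (G.adjOn Fᶜ)) = Nat.card (Quot (G.adjOn Set.univ)) :=
      le_antisymm h hle
    haveI := Fintype.ofFinite (Quot (G.adjOn Fᶜ))
    haveI := Fintype.ofFinite (Quot (G.adjOn (Set.univ : Set E)))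
    rw [Nat.card_eq_fintype_card, Nat.card_eq_fintype_card] at hcard
    exact ((Fintype.bijective_iff_surjective_and_card φ).2 ⟨hsurj, hcard⟩).1
lemma key_bounds (G : Multigraph V E) (k : ℕ) (hk : Odd k) (hkpos : 0 < k)
    (hG : G.OddEdgeConnected k)
    (hdeg : ∀ v, G.degree v = k ∨ G.degree v = 2 * k)
    (S T : Set V) (hST : Disjoint S T) (U : Set V)
    (hcomp : G.IsComponent (S ∪ T)ᶜ U)
    (hOdd : Odd ((∑ᶠ v ∈ U, G.degree v / k) + G.crossCount U T)) :
    Odd (G.crossCount U S) ∧ (G.crossCount U T = 0 → k ≤ G.crossCount U S) := by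
  classical
  set A := ∑ᶠ v ∈ U, G.degree v / k with hA
  have hdegv : ∀ v, G.degree v = k * (G.degree v / k) := by
    intro v
    rcases hdeg v with h | h <;> rw [h]
    · rw [Nat.div_self hkpos, mul_one]
    · rw [Nat.mul_div_cancel _ hkpos, mul_comm]
  have c1 : ∑ᶠ v ∈ U, G.degree v = ∑ v ∈ U.toFinset, G.degree v := by
    rw [← finsum_mem_coe_finset]; simp
  have c2 : A = ∑ v ∈ U.toFinset, G.degree v / k := by
    rw [hA, ← finsum_mem_coe_finset]; simp
  have hdegsum : ∑ᶠ v ∈ U, G.degree v = k * A := by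
    rw [c1, c2, Finset.mul_sum]
    exact Finset.sum_congr rfl (fun v _ => hdegv v)
  have p1 : (∑ᶠ v ∈ U, G.degree v) % 2 = G.crossCount U Uᶜ % 2 := by
    rw [sum_degree_mem]; exact halfedge_parity G U
  have p2 : G.crossCount U Uᶜ = G.crossCount U S + G.crossCount U T :=
    crossCount_split G hST hcomp
  have hk2 : k % 2 = 1 := Nat.odd_iff.mp hk
  have hka : (k * A) % 2 = A % 2 := by
    rw [Nat.mul_mod, hk2]; omega
  have hOdd2 : (A + G.crossCount U T) % 2 = 1 := Nat.odd_iff.mp hOdd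
  have hOddS : G.crossCount U S % 2 = 1 := by
    rw [hdegsum, hka, p2] at p1; omega
  refine ⟨Nat.odd_iff.mpr hOddS, fun hT0 => ?_⟩
  have hSeq : G.crossCount U S = G.crossCount U Uᶜ := by omega
  by_contra hlt
  push_neg at hlt
  have hle : G.crossCount U S ≤ k - 2 := by omega
  set F := {e : E | (G.ends e true ∈ U ∧ G.ends e false ∈ Uᶜ) ∨
       (G.ends e true ∈ Uᶜ ∧ G.ends e false ∈ U)} with hFdef
  have hFcard : F.ncard = G.crossCount U Uᶜ := rfl
  apply hG F (by rw [hFcard, ← hSeq]; exact hle)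
  constructor
  · rw [hFcard, ← hSeq]; exact Nat.odd_iff.mpr hOddS
  · apply cut_lt
    apply Set.nonempty_of_ncard_ne_zero
    rw [hFcard, ← hSeq]
    omega

end Helpers

/-- lower bound on `Σ_{U ∈ 𝒪} e(U,S)` in an odd-`k`-edge-connected
graph with all degrees `k` or `2k`, where `f(v) = d_G(v)/k`. -/
theorem sum_component_cross_lower_bound
    {V E : Type} [Fintype V] [Fintype E]
    (G : Multigraph V E) (k : ℕ) (hk : Odd k) (hkpos : 0 < k)
    (hG : G.OddEdgeConnected k)
    (hdeg : ∀ v, G.degree v = k ∨ G.degree v = 2 * k)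
    (S T : Set V) (hST : Disjoint S T) :
    k * {U : Set V | (G.IsComponent (S ∪ T)ᶜ U ∧
          Odd ((∑ᶠ v ∈ U, G.degree v / k) + G.crossCount U T)) ∧
          G.crossCount U T = 0}.ncard
      + {U : Set V | (G.IsComponent (S ∪ T)ᶜ U ∧
          Odd ((∑ᶠ v ∈ U, G.degree v / k) + G.crossCount U T)) ∧
          1 ≤ G.crossCount U T}.ncard
      ≤ ∑ᶠ U ∈ {U : Set V | G.IsComponent (S ∪ T)ᶜ U ∧
          Odd ((∑ᶠ v ∈ U, G.degree v / k) + G.crossCount U T)},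
          G.crossCount U S := by
  classical
  set P : Set V → Prop := fun U => G.IsComponent (S ∪ T)ᶜ U ∧
      Odd ((∑ᶠ v ∈ U, G.degree v / k) + G.crossCount U T) with hP
  set O : Set (Set V) := {U | P U} with hO
  set O1 : Set (Set V) := {U | P U ∧ G.crossCount U T = 0} with hO1
  set O2 : Set (Set V) := {U | P U ∧ 1 ≤ G.crossCount U T} with hO2
  have hOfin : O.Finite := Set.toFinite _
  have hO1fin : O1.Finite := Set.toFinite _
  have hO2fin : O2.Finite := Set.toFinite _
  have hsum : ∑ᶠ U ∈ O, G.crossCount U S = ∑ U ∈ hOfin.toFinset, G.crossCount U S := by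
    rw [← finsum_mem_coe_finset, Set.Finite.coe_toFinset]
  have hunion : hOfin.toFinset = hO1fin.toFinset ∪ hO2fin.toFinset := by
    ext U
    simp only [Set.Finite.mem_toFinset, Finset.mem_union, hO, hO1, hO2, Set.mem_setOf_eq]
    constructor
    · intro h
      rcases Nat.eq_zero_or_pos (G.crossCount U T) with h0 | h1
      · exact Or.inl ⟨h, h0⟩
      · exact Or.inr ⟨h, h1⟩
    · rintro (⟨h, -⟩ | ⟨h, -⟩) <;> exact h
  have hdisj : Disjoint hO1fin.toFinset hO2fin.toFinset := by
    rw [Finset.disjoint_left]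
    intro U h1 h2
    simp only [Set.Finite.mem_toFinset, hO1, hO2, Set.mem_setOf_eq] at h1 h2
    omega
  have hbound : ∀ U, P U → Odd (G.crossCount U S) ∧
      (G.crossCount U T = 0 → k ≤ G.crossCount U S) := by
    intro U hU
    exact key_bounds G k hk hkpos hG hdeg S T hST U hU.1 hU.2
  have hb1 : ∀ U ∈ hO1fin.toFinset, k ≤ G.crossCount U S := by
    intro U hU
    simp only [Set.Finite.mem_toFinset, hO1, Set.mem_setOf_eq] at hU
    exact (hbound U hU.1).2 hU.2
  have hb2 : ∀ U ∈ hO2fin.toFinset, 1 ≤ G.crossCount U S := by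
    intro U hU
    simp only [Set.Finite.mem_toFinset, hO2, Set.mem_setOf_eq] at hU
    exact (hbound U hU.1).1.pos
  rw [hsum, hunion, Finset.sum_union hdisj]
  have t1 : k * O1.ncard ≤ ∑ U ∈ hO1fin.toFinset, G.crossCount U S := by
    rw [Set.ncard_eq_toFinset_card O1 hO1fin]
    calc k * hO1fin.toFinset.card = ∑ _U ∈ hO1fin.toFinset, k := by
          rw [Finset.sum_const, smul_eq_mul, mul_comm]
      _ ≤ _ := Finset.sum_le_sum hb1
  have t2 : O2.ncard ≤ ∑ U ∈ hO2fin.toFinset, G.crossCount U S := by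
    rw [Set.ncard_eq_toFinset_card O2 hO2fin]
    calc hO2fin.toFinset.card = ∑ _U ∈ hO2fin.toFinset, 1 := by
          rw [Finset.sum_const, smul_eq_mul, mul_one]
      _ ≤ _ := Finset.sum_le_sum hb2
  exact add_le_add t1 t2
end

section
/- Let k be an odd positive integer and let G be a graph in which every vertex has degree k or 2k; define f(v) = d_G(v)/k. Let S and T be disjoint vertex subsets of G, let 𝒪 be the set of components U of G − S − T for which Σ_{v∈U} f(v) + e(U,T) is odd, and let 𝒪₂ = {U ∈ 𝒪 : e(U,T) ≥ 1}. Then e(S,T) = Σ_{v∈T} [d_G(v) − d_{G−S}(v)], and e(S,T) ≥ k·Σ_{v∈T} [f(v) − d_{G−S}(v)] + (k−1)·|𝒪₂|. -/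
section Aux

open scoped Classical

variable {V E : Type} [Fintype V] [Fintype E]

lemma Multigraph.degree_eq_ncard (G : Multigraph V E) (v : V) :
    G.degree v = {h : E × Bool | G.ends h.1 h.2 = v}.ncard := by
  rw [Multigraph.degree, ← Nat.card_coe_set_eq]; rfl

lemma Multigraph.degreeAvoiding_eq_ncard (G : Multigraph V E) (S : Set V) (v : V) :
    G.degreeAvoiding S v = {h : E × Bool | G.ends h.1 h.2 = v ∧
      (G.ends h.1 true ∉ S ∧ G.ends h.1 false ∉ S)}.ncard := by
  rw [Multigraph.degreeAvoiding, ← Nat.card_coe_set_eq]; rfl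

lemma Multigraph.fiber_sum (G : Multigraph V E) (T : Set V) (P : E × Bool → Prop) :
    ∑ᶠ v ∈ T, {h : E × Bool | G.ends h.1 h.2 = v ∧ P h}.ncard
      = {h : E × Bool | G.ends h.1 h.2 ∈ T ∧ P h}.ncard := by
  classical
  rw [finsum_mem_eq_finite_toFinset_sum _ (Set.toFinite T)]
  rw [Set.ncard_eq_toFinset_card _ (Set.toFinite _)]
  rw [Finset.card_eq_sum_card_fiberwise
    (f := fun h : E × Bool => G.ends h.1 h.2)
    (t := (Set.toFinite T).toFinset)
    (by intro x hx; simp only [Finset.mem_coe, Set.Finite.mem_toFinset, Set.mem_setOf_eq] at hx ⊢; exact hx.1)]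
  apply Finset.sum_congr rfl
  intro v hv
  have hvT : v ∈ T := by simpa using hv
  rw [Set.ncard_eq_toFinset_card _ (Set.toFinite _)]
  congr 1
  ext h
  simp only [Set.Finite.mem_toFinset, Set.mem_setOf_eq, Finset.mem_filter]
  constructor
  · rintro ⟨he, hp⟩
    exact ⟨⟨he ▸ hvT, hp⟩, he⟩
  · rintro ⟨⟨_, hp⟩, he⟩
    exact ⟨he, hp⟩

lemma Multigraph.degree_decomp (G : Multigraph V E) (S : Set V) (v : V) :
    G.degree v = G.degreeAvoiding S v +
      {h : E × Bool | G.ends h.1 h.2 = v ∧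
        (G.ends h.1 true ∈ S ∨ G.ends h.1 false ∈ S)}.ncard := by
  classical
  rw [G.degree_eq_ncard, G.degreeAvoiding_eq_ncard,
    ← Set.ncard_union_eq ?_ (Set.toFinite _) (Set.toFinite _)]
  · congr 1
    ext h
    simp only [Set.mem_union, Set.mem_setOf_eq]
    tauto
  · rw [Set.disjoint_left]
    rintro h ⟨_, hs1, hs2⟩ ⟨_, hs⟩
    tauto

lemma Multigraph.cross_halfedges (G : Multigraph V E) (S T : Set V) (hST : Disjoint S T) :
    {h : E × Bool | G.ends h.1 h.2 ∈ T ∧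
      (G.ends h.1 true ∈ S ∨ G.ends h.1 false ∈ S)}.ncard = G.crossCount S T := by
  classical
  have hd : ∀ a, a ∈ S → a ∉ T := fun a ha => Set.disjoint_left.mp hST ha
  have himg : Prod.fst '' {h : E × Bool | G.ends h.1 h.2 ∈ T ∧
      (G.ends h.1 true ∈ S ∨ G.ends h.1 false ∈ S)}
      = {e | (G.ends e true ∈ S ∧ G.ends e false ∈ T) ∨
             (G.ends e true ∈ T ∧ G.ends e false ∈ S)} := by
    ext e
    constructor
    · rintro ⟨⟨e', b⟩, ⟨hT, hS⟩, rfl⟩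
      cases b with
      | true => exact Or.inr ⟨hT, hS.resolve_left (fun hs => hd _ hs hT)⟩
      | false => exact Or.inl ⟨hS.resolve_right (fun hs => hd _ hs hT), hT⟩
    · rintro (⟨h1, h2⟩ | ⟨h1, h2⟩)
      · exact ⟨(e, false), ⟨h2, Or.inl h1⟩, rfl⟩
      · exact ⟨(e, true), ⟨h1, Or.inr h2⟩, rfl⟩
  have hinj : Set.InjOn Prod.fst {h : E × Bool | G.ends h.1 h.2 ∈ T ∧
      (G.ends h.1 true ∈ S ∨ G.ends h.1 false ∈ S)} := by
    rintro ⟨e, b⟩ hb ⟨e', b'⟩ hb' hfst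
    simp only at hfst
    subst hfst
    simp only [Set.mem_setOf_eq] at hb hb'
    by_cases hbb : b = b'
    · rw [hbb]
    · exfalso
      have hTT : G.ends e true ∈ T ∧ G.ends e false ∈ T := by
        cases b with
        | true =>
          cases b' with
          | true => exact absurd rfl hbb
          | false => exact ⟨hb.1, hb'.1⟩
        | false =>
          cases b' with
          | true => exact ⟨hb'.1, hb.1⟩
          | false => exact absurd rfl hbb
      rcases hb.2 with hs | hs
      · exact hd _ hs hTT.1
      · exact hd _ hs hTT.2
  rw [Multigraph.crossCount, ← himg, Set.ncard_image_of_injOn hinj]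

lemma Multigraph.IsComponent.eq_of_mem {V E : Type} {G : Multigraph V E} {W U U' : Set V}
    (h : G.IsComponent W U) (h' : G.IsComponent W U') {x : V}
    (hx : x ∈ U) (hx' : x ∈ U') : U = U' := by
  ext y
  rw [h.2.2 x hx y, h'.2.2 x hx' y]

lemma Multigraph.comp_card_le (G : Multigraph V E) (S T : Set V) (hST : Disjoint S T) :
    {U : Set V | G.IsComponent (S ∪ T)ᶜ U ∧ 1 ≤ G.crossCount U T}.ncard
      ≤ {h : E × Bool | G.ends h.1 h.2 ∈ T ∧
          (G.ends h.1 true ∉ S ∧ G.ends h.1 false ∉ S)}.ncard := by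
  classical
  rcases isEmpty_or_nonempty E with hE | hE
  · have : {U : Set V | G.IsComponent (S ∪ T)ᶜ U ∧ 1 ≤ G.crossCount U T} = ∅ := by
      ext U
      simp only [Set.mem_setOf_eq, Set.mem_empty_iff_false, iff_false, not_and]
      intro _
      have : {e | (G.ends e true ∈ U ∧ G.ends e false ∈ T) ∨
          (G.ends e true ∈ T ∧ G.ends e false ∈ U)} = (∅ : Set E) :=
        Set.eq_empty_of_isEmpty _
      rw [Multigraph.crossCount, this, Set.ncard_empty]
      omega
    rw [this, Set.ncard_empty]
    exact Nat.zero_le _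
  · obtain ⟨e0⟩ := hE
    have hex : ∀ U : Set V, ∃ h : E × Bool,
        (G.IsComponent (S ∪ T)ᶜ U ∧ 1 ≤ G.crossCount U T) →
        ((G.ends h.1 h.2 ∈ T ∧ (G.ends h.1 true ∉ S ∧ G.ends h.1 false ∉ S)) ∧
          G.ends h.1 (!h.2) ∈ U) := by
      intro U
      by_cases hU : (G.IsComponent (S ∪ T)ᶜ U ∧ 1 ≤ G.crossCount U T)
      · obtain ⟨hcomp, hcc⟩ := hU
        have hne : {e | (G.ends e true ∈ U ∧ G.ends e false ∈ T) ∨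
            (G.ends e true ∈ T ∧ G.ends e false ∈ U)}.Nonempty := by
          apply Set.nonempty_of_ncard_ne_zero
          rw [Multigraph.crossCount] at hcc
          omega
        obtain ⟨e, he⟩ := hne
        have hUW : U ⊆ (S ∪ T)ᶜ := hcomp.2.1
        have hd : ∀ a, a ∈ S → a ∉ T := fun a ha => Set.disjoint_left.mp hST ha
        rcases he with ⟨h1, h2⟩ | ⟨h1, h2⟩
        · refine ⟨(e, false), fun _ => ⟨⟨h2, fun hs => (hUW h1) (Or.inl hs),
            fun hs => hd _ hs h2⟩, ?_⟩⟩
          simpa using h1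
        · refine ⟨(e, true), fun _ => ⟨⟨h1, fun hs => hd _ hs h1,
            fun hs => (hUW h2) (Or.inl hs)⟩, ?_⟩⟩
          simpa using h2
      · exact ⟨(e0, true), fun hc => absurd hc hU⟩
    choose f hf using hex
    apply Set.ncard_le_ncard_of_injOn f
    · intro U hU
      exact (hf U hU).1
    · intro U hU U' hU' heq
      have h1 := (hf U hU).2
      have h2 := (hf U' hU').2
      rw [heq] at h1
      exact Multigraph.IsComponent.eq_of_mem hU.1 hU'.1 h1 h2

end Aux

/-- the identity `e(S,T) = Σ_{v ∈ T} [d_G(v) − d_{G−S}(v)]` and the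
lower bound `e(S,T) ≥ k Σ_{v ∈ T} [f(v) − d_{G−S}(v)] + (k−1)|𝒪₂|`, where
`f(v) = d_G(v)/k` and all degrees are `k` or `2k`. -/
theorem cross_ST_identity_and_lower_bound
    {V E : Type} [Fintype V] [Fintype E]
    (G : Multigraph V E) (k : ℕ) (hk : Odd k) (hkpos : 0 < k)
    (hdeg : ∀ v, G.degree v = k ∨ G.degree v = 2 * k)
    (S T : Set V) (hST : Disjoint S T) :
    (G.crossCount S T : ℤ) =
        (∑ᶠ v ∈ T, ((G.degree v : ℤ) - (G.degreeAvoiding S v : ℤ))) ∧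
    (k : ℤ) * (∑ᶠ v ∈ T, ((G.degree v / k : ℕ) - (G.degreeAvoiding S v : ℤ)))
        + ((k : ℤ) - 1) * {U : Set V | (G.IsComponent (S ∪ T)ᶜ U ∧
            Odd ((∑ᶠ v ∈ U, G.degree v / k) + G.crossCount U T)) ∧
            1 ≤ G.crossCount U T}.ncard
      ≤ (G.crossCount S T : ℤ) := by
  classical
  have hT : T.Finite := Set.toFinite T
  set Tf : Finset V := hT.toFinset with hTf
  -- degree = k * (degree / k)
  have hdk : ∀ v : V, (G.degree v : ℤ) = (k : ℤ) * ((G.degree v / k : ℕ) : ℤ) := by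
    intro v
    rcases hdeg v with h | h
    · rw [h, Nat.div_self hkpos]
      push_cast; ring
    · rw [h, Nat.mul_div_cancel 2 hkpos]
      push_cast; ring
  -- Part 1
  have part1 : (G.crossCount S T : ℤ) =
      ∑ᶠ v ∈ T, ((G.degree v : ℤ) - (G.degreeAvoiding S v : ℤ)) := by
    have h1 : ∀ v : V, (G.degree v : ℤ) - (G.degreeAvoiding S v : ℤ) =
        (({h : E × Bool | G.ends h.1 h.2 = v ∧
          (G.ends h.1 true ∈ S ∨ G.ends h.1 false ∈ S)}.ncard : ℕ) : ℤ) := by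
      intro v
      have := G.degree_decomp S v
      push_cast [this]
      ring
    rw [finsum_mem_eq_finite_toFinset_sum _ hT, ← hTf]
    calc (G.crossCount S T : ℤ)
        = ({h : E × Bool | G.ends h.1 h.2 ∈ T ∧
            (G.ends h.1 true ∈ S ∨ G.ends h.1 false ∈ S)}.ncard : ℤ) := by
          rw [G.cross_halfedges S T hST]
      _ = ((∑ᶠ v ∈ T, {h : E × Bool | G.ends h.1 h.2 = v ∧
            (G.ends h.1 true ∈ S ∨ G.ends h.1 false ∈ S)}.ncard : ℕ) : ℤ) := by
          rw [G.fiber_sum T]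
      _ = ((∑ v ∈ Tf, {h : E × Bool | G.ends h.1 h.2 = v ∧
            (G.ends h.1 true ∈ S ∨ G.ends h.1 false ∈ S)}.ncard : ℕ) : ℤ) := by
          rw [finsum_mem_eq_finite_toFinset_sum _ hT, ← hTf]
      _ = ∑ v ∈ Tf, ((G.degree v : ℤ) - (G.degreeAvoiding S v : ℤ)) := by
          push_cast
          exact Finset.sum_congr rfl fun v _ => (h1 v).symm
  refine ⟨part1, ?_⟩
  -- Part 2
  rw [part1, finsum_mem_eq_finite_toFinset_sum _ hT, finsum_mem_eq_finite_toFinset_sum _ hT, ← hTf]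
  -- the component count
  set N : ℕ := {U : Set V | (G.IsComponent (S ∪ T)ᶜ U ∧
      Odd ((∑ᶠ v ∈ U, G.degree v / k) + G.crossCount U T)) ∧
      1 ≤ G.crossCount U T}.ncard with hN
  have hNle : N ≤ ∑ v ∈ Tf, G.degreeAvoiding S v := by
    have hsub : {U : Set V | (G.IsComponent (S ∪ T)ᶜ U ∧
        Odd ((∑ᶠ v ∈ U, G.degree v / k) + G.crossCount U T)) ∧
        1 ≤ G.crossCount U T} ⊆
        {U : Set V | G.IsComponent (S ∪ T)ᶜ U ∧ 1 ≤ G.crossCount U T} :=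
      fun U hU => ⟨hU.1.1, hU.2⟩
    have h1 : N ≤ {U : Set V | G.IsComponent (S ∪ T)ᶜ U ∧ 1 ≤ G.crossCount U T}.ncard :=
      Set.ncard_le_ncard hsub (Set.toFinite _)
    have h2 := G.comp_card_le S T hST
    have h3 : {h : E × Bool | G.ends h.1 h.2 ∈ T ∧
        (G.ends h.1 true ∉ S ∧ G.ends h.1 false ∉ S)}.ncard
        = ∑ v ∈ Tf, G.degreeAvoiding S v := by
      rw [← G.fiber_sum T (fun h => G.ends h.1 true ∉ S ∧ G.ends h.1 false ∉ S),
        finsum_mem_eq_finite_toFinset_sum _ hT, ← hTf]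
      exact Finset.sum_congr rfl fun v _ => (G.degreeAvoiding_eq_ncard S v).symm
    omega
  have hsum : ∑ v ∈ Tf, ((G.degree v : ℤ) - (G.degreeAvoiding S v : ℤ)) =
      (k : ℤ) * ∑ v ∈ Tf, (((G.degree v / k : ℕ) : ℤ) - (G.degreeAvoiding S v : ℤ))
      + ((k : ℤ) - 1) * ∑ v ∈ Tf, ((G.degreeAvoiding S v : ℕ) : ℤ) := by
    rw [Finset.mul_sum, Finset.mul_sum, ← Finset.sum_add_distrib]
    apply Finset.sum_congr rfl
    intro v _
    rw [hdk v]
    ring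
  have hk1 : (1 : ℤ) ≤ (k : ℤ) := by exact_mod_cast hkpos
  have hNcast : (N : ℤ) ≤ ∑ v ∈ Tf, ((G.degreeAvoiding S v : ℕ) : ℤ) := by
    rw [← Nat.cast_sum]
    exact_mod_cast hNle
  have hmul : ((k : ℤ) - 1) * (N : ℤ) ≤
      ((k : ℤ) - 1) * ∑ v ∈ Tf, ((G.degreeAvoiding S v : ℕ) : ℤ) :=
    mul_le_mul_of_nonneg_left hNcast (by linarith)
  linarith
end
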